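/- Let X be a scheme of finite type over k and let p ≤ m ≤ 2p+1. If γ ∈ J_p(X) is a p-jet, based at x ∈ X, whose fiber π_{m,p}^{-1}(γ) in J_m(X) is nonempty, then π_{m,p}^{-1}(γ) is a torsor under, and (after choosing a base point) isomorphic to, Hom_{k[t]/(t^{p+1})}(γ*Ω_X, (t^{p+1})/(t^{m+1})). -/

import Mathlib

open Polynomial

/-- The truncated polynomial ring `A[t]/(t^{m+1})`. -/
noncomputable abbrev TruncPoly (A : Type*) [CommRing A] (m : ℕ) : Type _ :=
  Polynomial A ⧸ (Ideal.span {(Polynomial.X : Polynomial A) ^ (m + 1)})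

/-- Truncation `A[t]/(t^{m+1}) → A[t]/(t^{p+1})` for `p ≤ m`. -/
noncomputable def truncTrunc (k : Type*) (A : Type*) [CommSemiring k] [CommRing A] [Algebra k A]
    {m p : ℕ} (h : p ≤ m) : TruncPoly A m →ₐ[k] TruncPoly A p :=
  Ideal.Quotient.liftₐ _ (Ideal.Quotient.mkₐ k _) (fun a ha => by
    rw [Ideal.Quotient.mkₐ_eq_mk, Ideal.Quotient.eq_zero_iff_mem]
    exact Ideal.span_singleton_le_span_singleton.2
      (pow_dvd_pow _ (by omega)) ha)

/-- Evaluation at `t = 0`, i.e. the constant term `A[t]/(t^{m+1}) → A`. -/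
noncomputable def truncEv0 (k : Type*) (A : Type*) [CommSemiring k] [CommRing A] [Algebra k A]
    (m : ℕ) : TruncPoly A m →ₐ[k] A :=
  Ideal.Quotient.liftₐ _ ((Polynomial.aeval (0 : A)).restrictScalars k) (fun a ha => by
    obtain ⟨c, rfl⟩ := Ideal.mem_span_singleton.1 ha
    simp)

/-- (Affine model `X = Spec R`.)  Let `p ≤ m ≤ 2p+1` and let
`γ : R → k[t]/(t^{p+1})` be a `p`-jet whose fiber under `π_{m,p}` is nonempty, say containing
`δ₀`.  Then the fiber `π_{m,p}⁻¹(γ)` is a torsor under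
`Hom_{k[t]/(t^{p+1})}(γ*Ω_X, (t^{p+1})/(t^{m+1}))`, which is identified with the module of
`k`-linear maps `D : R → k[t]/(t^{m+1})` taking values in the ideal `(t^{p+1})` and satisfying
the Leibniz rule twisted by `δ₀`; the bijection sends `δ` to `δ - δ₀`. -/
theorem statement_14 (k R : Type*) [Field k] [CommRing R] [Algebra k R]
    [Algebra.FiniteType k R] (p m : ℕ) (hpm : p ≤ m) (hm : m ≤ 2 * p + 1)
    (γ : R →ₐ[k] TruncPoly k p)
    (δ0 : R →ₐ[k] TruncPoly k m) (h0 : (truncTrunc k k hpm).comp δ0 = γ) :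
    ∃ e : {δ : R →ₐ[k] TruncPoly k m // (truncTrunc k k hpm).comp δ = γ} ≃
        {D : R →ₗ[k] TruncPoly k m //
          (∀ x, D x ∈ Ideal.span
            {Ideal.Quotient.mk _ ((Polynomial.X : Polynomial k) ^ (p + 1))}) ∧
          ∀ x y, D (x * y) = δ0 x * D y + δ0 y * D x},
      ∀ δ x, ((e δ).1 : R →ₗ[k] TruncPoly k m) x = δ.1 x - δ0 x := by
  set τ : TruncPoly k m :=
    Ideal.Quotient.mk _ ((Polynomial.X : Polynomial k) ^ (p + 1)) with hτ
  -- products of two elements of (t^{p+1}) vanish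
  have hττ : ∀ a b : TruncPoly k m, a ∈ Ideal.span {τ} → b ∈ Ideal.span {τ} →
      a * b = 0 := by
    intro a b ha hb
    obtain ⟨c, rfl⟩ := Ideal.mem_span_singleton.1 ha
    obtain ⟨d, rfl⟩ := Ideal.mem_span_singleton.1 hb
    have hz : τ * τ = 0 := by
      rw [hτ, ← map_mul, Ideal.Quotient.eq_zero_iff_mem, Ideal.mem_span_singleton,
        ← pow_add]
      exact pow_dvd_pow _ (by omega)
    rw [mul_mul_mul_comm, hz, zero_mul]
  -- truncTrunc on mk
  have htt : ∀ f : Polynomial k,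
      truncTrunc k k hpm (Ideal.Quotient.mk _ f) = Ideal.Quotient.mk _ f := fun f => rfl
  -- kernel of truncTrunc is span {τ}
  have hker : ∀ z : TruncPoly k m, truncTrunc k k hpm z = 0 → z ∈ Ideal.span {τ} := by
    intro z hz
    obtain ⟨f, rfl⟩ := Ideal.Quotient.mk_surjective z
    rw [htt, Ideal.Quotient.eq_zero_iff_mem, Ideal.mem_span_singleton] at hz
    obtain ⟨c, rfl⟩ := hz
    rw [Ideal.mem_span_singleton, hτ]
    exact ⟨Ideal.Quotient.mk _ c, by rw [← map_mul]⟩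
  have hmem : ∀ (δ : R →ₐ[k] TruncPoly k m), (truncTrunc k k hpm).comp δ = γ →
      ∀ x, δ x - δ0 x ∈ Ideal.span {τ} := by
    intro δ hδ x
    refine hker _ ?_
    rw [map_sub]
    rw [show truncTrunc k k hpm (δ x) = γ x from AlgHom.congr_fun hδ x,
      show truncTrunc k k hpm (δ0 x) = γ x from AlgHom.congr_fun h0 x, sub_self]
  refine ⟨⟨fun δ => ⟨δ.1.toLinearMap - δ0.toLinearMap,
      fun x => hmem δ.1 δ.2 x,
      fun x y => by
        simp only [LinearMap.sub_apply, AlgHom.toLinearMap_apply, map_mul]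
        linear_combination hττ _ _ (hmem δ.1 δ.2 x) (hmem δ.1 δ.2 y)⟩,
    fun D => ⟨?_, ?_⟩, ?_, ?_⟩, ?_⟩
  · -- the algebra hom δ0 + D
    refine AlgHom.ofLinearMap (δ0.toLinearMap + D.1) ?_ ?_
    · have h1 : D.1 1 = 0 := by
        have h := D.2.2 1 1
        have h10 : δ0 (1 : R) = 1 := map_one δ0
        rw [mul_one, h10, one_mul] at h
        exact right_eq_add.mp h
      simp [h1]
    · intro x y
      simp only [LinearMap.add_apply, AlgHom.toLinearMap_apply, map_mul, D.2.2 x y]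
      linear_combination - hττ _ _ (D.2.1 x) (D.2.1 y)
  · -- truncation condition
    ext x
    simp only [AlgHom.comp_apply, AlgHom.ofLinearMap_apply, LinearMap.add_apply,
      AlgHom.toLinearMap_apply, map_add]
    have hDx : truncTrunc k k hpm (D.1 x) = 0 := by
      obtain ⟨c, hc⟩ := Ideal.mem_span_singleton.1 (D.2.1 x)
      obtain ⟨g, rfl⟩ := Ideal.Quotient.mk_surjective c
      rw [hc, hτ, ← map_mul, htt, Ideal.Quotient.eq_zero_iff_mem,
        Ideal.mem_span_singleton]
      exact Dvd.dvd.mul_right (pow_dvd_pow _ (by omega)) g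
    rw [hDx, add_zero]
    exact AlgHom.congr_fun h0 x
  · -- left inverse
    intro δ
    apply Subtype.ext
    apply AlgHom.ext
    intro x
    simp
  · -- right inverse
    intro D
    apply Subtype.ext
    apply LinearMap.ext
    intro x
    simp
  · intro δ x
    simp
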